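/- Let $T_t = \sum_{i=0}^{n}\mathfrak{T}_i t^i$ be an order $n$ deformation of a relative Rota-Baxter operator $T$ on a Leibniz triple system $(\mathfrak{L},\{\cdot,\cdot,\cdot\})$ with respect to a representation $(r,m,l)$ on $V$. Then $T_t$ extends to an order $n+1$ deformation if and only if the cohomology class of the obstruction cochain $\mathrm{Ob}_T(u,v,w) = \sum_{i+j+k=n+1,\ 0\leq i,j,k\leq n}\big(\{\mathfrak{T}_iu,\mathfrak{T}_jv,\mathfrak{T}_kw\} - \mathfrak{T}_i(l(\mathfrak{T}_ju,\mathfrak{T}_kv)w + m(\mathfrak{T}_ku,\mathfrak{T}_jw)v + r(\mathfrak{T}_jv,\mathfrak{T}_kw)u)\big)$ is trivial; i.e., there exists $\mathfrak{T}_{n+1}:V\to\mathfrak{L}$ with $\mathrm{Ob}_T = -\partial^1\mathfrak{T}_{n+1}$. -/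
import Mathlib


def IsTrilin (K : Type*) [Field K] {L M : Type*} [AddCommGroup L] [Module K L]
    [AddCommGroup M] [Module K M] (t : L → L → L → M) : Prop :=
  (∀ y z, IsLinearMap K fun x => t x y z) ∧ (∀ x z, IsLinearMap K fun y => t x y z) ∧
    (∀ x y, IsLinearMap K fun z => t x y z)

def LTSIdent {L : Type*} [AddCommGroup L] (t : L → L → L → L) : Prop :=
  (∀ a b c d e, t a b (t c d e) =
      t (t a b c) d e - t (t a b d) c e - t (t a b e) c d + t (t a b e) d c) ∧
  (∀ a b c d e, t a (t b c d) e =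
      t (t a b c) d e - t (t a c b) d e - t (t a d b) c e + t (t a d c) b e)

def IsLTS (K : Type*) [Field K] {L : Type*} [AddCommGroup L] [Module K L]
    (t : L → L → L → L) : Prop := IsTrilin K t ∧ LTSIdent t

def sd {L V : Type*} [AddCommGroup L] [AddCommGroup V]
    (t : L → L → L → L) (l m r : L → L → V → V) :
    L × V → L × V → L × V → L × V :=
  fun p q s => (t p.1 q.1 s.1, l p.1 q.1 s.2 + m p.1 s.1 q.2 + r q.1 s.1 p.2)

def IsRep (K : Type*) [Field K] {L V : Type*} [AddCommGroup L] [Module K L]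
    [AddCommGroup V] [Module K V] (t : L → L → L → L) (l m r : L → L → V → V) : Prop :=
  IsLTS K (sd t l m r)

def IsRRB {K : Type*} [Field K] {L V : Type*} [AddCommGroup L] [Module K L]
    [AddCommGroup V] [Module K V] (t : L → L → L → L) (l m r : L → L → V → V)
    (T : V →ₗ[K] L) : Prop :=
  ∀ u v w, t (T u) (T v) (T w) =
    T (l (T u) (T v) w + m (T u) (T w) v + r (T v) (T w) u)

def IsRB {K : Type*} [Field K] {L : Type*} [AddCommGroup L] [Module K L]
    (t : L → L → L → L) (R : L →ₗ[K] L) : Prop :=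
  ∀ x y z, t (R x) (R y) (R z) =
    R (t (R x) (R y) z + t (R x) y (R z) + t x (R y) (R z))

def IsNij {K : Type*} [Field K] {A : Type*} [AddCommGroup A] [Module K A]
    (t : A → A → A → A) (N : A →ₗ[K] A) : Prop :=
  ∀ x y z, t (N x) (N y) (N z) =
    N (t (N x) (N y) z) + N (t x (N y) (N z)) + N (t (N x) y (N z))
      - N (N (t (N x) y z)) - N (N (t x (N y) z)) - N (N (t x y (N z)))
      + N (N (N (t x y z)))

lemma ind_sum {M : Type*} [AddCommGroup M] (n a b : ℕ) (ha : a < n + 2) (hb : b < n + 2 - a)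
    (d : M) :
    (∑ i ∈ Finset.range (n + 2), ∑ j ∈ Finset.range (n + 2 - i),
      if i = a ∧ j = b then d else 0) = d := by
  rw [Finset.sum_eq_single_of_mem a (Finset.mem_range.mpr ha)]
  · rw [Finset.sum_eq_single_of_mem b (Finset.mem_range.mpr hb)]
    · simp
    · intro j _ hne; simp [hne]
  · intro i _ hne; simp [hne]

lemma main_aux {M : Type*} [AddCommGroup M] (n : ℕ) (f g ob : ℕ → ℕ → M)
    (d1 d2 d3 p : M) (hp : d1 + d2 + d3 = p)
    (h : ∀ i < n + 2, ∀ j < n + 2 - i, f i j - g i j = ob i j +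
      ((if i = n + 1 ∧ j = 0 then d1 else 0) + (if i = 0 ∧ j = n + 1 then d2 else 0)
        + (if i = 0 ∧ j = 0 then d3 else 0))) :
    ((∑ i ∈ Finset.range (n + 2), ∑ j ∈ Finset.range (n + 2 - i), f i j) =
      ∑ i ∈ Finset.range (n + 2), ∑ j ∈ Finset.range (n + 2 - i), g i j) ↔
    ((∑ i ∈ Finset.range (n + 2), ∑ j ∈ Finset.range (n + 2 - i), ob i j) = -p) := by
  rw [← sub_eq_zero, eq_neg_iff_add_eq_zero, ← hp]
  have key : (∑ i ∈ Finset.range (n + 2), ∑ j ∈ Finset.range (n + 2 - i), f i j) -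
      (∑ i ∈ Finset.range (n + 2), ∑ j ∈ Finset.range (n + 2 - i), g i j) =
      (∑ i ∈ Finset.range (n + 2), ∑ j ∈ Finset.range (n + 2 - i), ob i j)
        + (d1 + d2 + d3) := by
    simp only [← Finset.sum_sub_distrib]
    rw [Finset.sum_congr rfl fun i hi => Finset.sum_congr rfl fun j hj =>
      h i (Finset.mem_range.mp hi) j (Finset.mem_range.mp hj)]
    simp only [Finset.sum_add_distrib]
    rw [ind_sum n (n+1) 0 (by omega) (by omega), ind_sum n 0 (n+1) (by omega) (by omega),
      ind_sum n 0 0 (by omega) (by omega)]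
    try abel
  rw [key]


theorem stmt14 {K : Type*} [Field K] {L V : Type*} [AddCommGroup L] [Module K L]
    [AddCommGroup V] [Module K V]
    (t : L → L → L → L) (l m r : L → L → V → V)
    (hL : IsLTS K t) (hrep : IsRep K t l m r)
    (n : ℕ) (𝔗 : ℕ → (V →ₗ[K] L)) (hT : IsRRB t l m r (𝔗 0))
    (hdef : ∀ s ≤ n, ∀ u v w : V,
      (∑ i ∈ Finset.range (s + 1), ∑ j ∈ Finset.range (s + 1 - i),
        t (𝔗 i u) (𝔗 j v) (𝔗 (s - i - j) w)) =
      ∑ i ∈ Finset.range (s + 1), ∑ j ∈ Finset.range (s + 1 - i),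
        𝔗 i (l (𝔗 j u) (𝔗 (s - i - j) v) w + m (𝔗 (s - i - j) u) (𝔗 j w) v
          + r (𝔗 j v) (𝔗 (s - i - j) w) u)) :
    -- `T_t` is extendable
    (∃ Tnext : V →ₗ[K] L, ∀ u v w : V,
      (∑ i ∈ Finset.range (n + 2), ∑ j ∈ Finset.range (n + 2 - i),
        t ((if i = n + 1 then Tnext else 𝔗 i) u)
          ((if j = n + 1 then Tnext else 𝔗 j) v)
          ((if n + 1 - i - j = n + 1 then Tnext else 𝔗 (n + 1 - i - j)) w)) =
      ∑ i ∈ Finset.range (n + 2), ∑ j ∈ Finset.range (n + 2 - i),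
        (if i = n + 1 then Tnext else 𝔗 i)
          (l ((if j = n + 1 then Tnext else 𝔗 j) u)
              ((if n + 1 - i - j = n + 1 then Tnext else 𝔗 (n + 1 - i - j)) v) w
            + m ((if n + 1 - i - j = n + 1 then Tnext else 𝔗 (n + 1 - i - j)) u)
              ((if j = n + 1 then Tnext else 𝔗 j) w) v
            + r ((if j = n + 1 then Tnext else 𝔗 j) v)
              ((if n + 1 - i - j = n + 1 then Tnext else 𝔗 (n + 1 - i - j)) w) u))
    ↔
    -- the obstruction class is trivial: `Ob_T = -∂¹ 𝔗_{n+1}`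
    (∃ Tnext : V →ₗ[K] L, ∀ u v w : V,
      (∑ i ∈ Finset.range (n + 2), ∑ j ∈ Finset.range (n + 2 - i),
        if i ≤ n ∧ j ≤ n ∧ n + 1 - i - j ≤ n then
          t (𝔗 i u) (𝔗 j v) (𝔗 (n + 1 - i - j) w)
            - 𝔗 i (l (𝔗 j u) (𝔗 (n + 1 - i - j) v) w
              + m (𝔗 (n + 1 - i - j) u) (𝔗 j w) v
              + r (𝔗 j v) (𝔗 (n + 1 - i - j) w) u)
        else 0) =
      -(t (Tnext u) (𝔗 0 v) (𝔗 0 w)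
          - 𝔗 0 (l (Tnext u) (𝔗 0 v) w + m (Tnext u) (𝔗 0 w) v)
          + t (𝔗 0 u) (Tnext v) (𝔗 0 w)
          - 𝔗 0 (l (𝔗 0 u) (Tnext v) w + r (Tnext v) (𝔗 0 w) u)
          + t (𝔗 0 u) (𝔗 0 v) (Tnext w)
          - 𝔗 0 (m (𝔗 0 u) (Tnext w) v + r (𝔗 0 v) (Tnext w) u)
          - Tnext (l (𝔗 0 u) (𝔗 0 v) w + m (𝔗 0 u) (𝔗 0 w) v
            + r (𝔗 0 v) (𝔗 0 w) u))) := by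
  refine exists_congr fun N => forall_congr' fun u => forall_congr' fun v =>
    forall_congr' fun w => ?_
  refine main_aux n _ _ _
    (t (N u) (𝔗 0 v) (𝔗 0 w)
      - N (l (𝔗 0 u) (𝔗 0 v) w + m (𝔗 0 u) (𝔗 0 w) v + r (𝔗 0 v) (𝔗 0 w) u))
    (t (𝔗 0 u) (N v) (𝔗 0 w)
      - 𝔗 0 (l (N u) (𝔗 0 v) w + m (𝔗 0 u) (N w) v + r (N v) (𝔗 0 w) u))
    (t (𝔗 0 u) (𝔗 0 v) (N w)
      - 𝔗 0 (l (𝔗 0 u) (N v) w + m (N u) (𝔗 0 w) v + r (𝔗 0 v) (N w) u))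
    _ (by simp only [map_add]; abel) ?_
  intro i hi j hj
  by_cases h1 : i = n + 1
  · subst h1
    have hj0 : j = 0 := by omega
    subst hj0
    simp [show n + 1 - (n + 1) - 0 = 0 from by omega, show ¬((0:ℕ) = n + 1) from by omega,
      show ¬(n + 1 ≤ n) from by omega]
  · by_cases h2 : j = n + 1
    · subst h2
      have hi0 : i = 0 := by omega
      subst hi0
      simp [show n + 1 - 0 - (n + 1) = 0 from by omega, show ¬((0:ℕ) = n + 1) from by omega,
        show ¬(n + 1 ≤ n) from by omega]
    · by_cases h3 : i = 0 ∧ j = 0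
      · obtain ⟨hi0, hj0⟩ := h3
        subst hi0; subst hj0
        simp [show n + 1 - 0 - 0 = n + 1 from by omega, show ¬((0:ℕ) = n + 1) from by omega,
          show ¬(n + 1 ≤ n) from by omega]
      · simp [h1, h2, h3, show n + 1 - i - j ≠ n + 1 from by omega,
          show i ≤ n from by omega, show j ≤ n from by omega,
          show n + 1 - i - j ≤ n from by omega]
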